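/- For n×n symmetric positive definite matrices X and M, and any n×n symmetric matrix H, the solution L of the generalized Lyapunov equation X L M + M L X = H satisfies tr(L H) ≥ 0, with equality iff H = 0. Hence g(U,V) = (1/2) tr(L_{X,M}[U] V) defines a positive definite bilinear form on symmetric matrices. -/

import Mathlib

open Matrix
open scoped MatrixOrder

lemma trace_transpose_mul_self_nonneg {n : Type*} [Fintype n]
    (N : Matrix n n ℝ) : 0 ≤ (Nᵀ * N).trace := by
  rw [Matrix.trace]
  apply Finset.sum_nonneg
  intro j _
  simp only [Matrix.diag_apply, Matrix.mul_apply, Matrix.transpose_apply]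
  exact Finset.sum_nonneg fun i _ => mul_self_nonneg _

lemma trace_transpose_mul_self_eq_zero {n : Type*} [Fintype n]
    (N : Matrix n n ℝ) : (Nᵀ * N).trace = 0 ↔ N = 0 := by
  constructor
  · intro h
    ext i j
    have h' : ∀ k ∈ Finset.univ, (0:ℝ) ≤ (Nᵀ * N).diag k :=
      fun k _ => by
        simp only [Matrix.diag_apply, Matrix.mul_apply, Matrix.transpose_apply]
        exact Finset.sum_nonneg fun i _ => mul_self_nonneg _
    have hz := (Finset.sum_eq_zero_iff_of_nonneg h').mp h j (Finset.mem_univ j)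
    simp only [Matrix.diag_apply, Matrix.mul_apply, Matrix.transpose_apply] at hz
    have h2 : ∀ k ∈ Finset.univ, (0:ℝ) ≤ N k j * N k j :=
      fun k _ => mul_self_nonneg _
    have := (Finset.sum_eq_zero_iff_of_nonneg h2).mp hz i (Finset.mem_univ i)
    have : N i j = 0 := by nlinarith
    simpa using this
  · intro h; simp [h]

/-- If L solves the generalized Lyapunov equation X L M + M L X = H (X, M SPD, H symmetric)
then tr(L H) ≥ 0 with equality iff H = 0; hence (U,V) ↦ (1/2) tr(L_{X,M}[U] V) is a
positive definite bilinear form on symmetric matrices. -/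
theorem stmt2 {n : Type*} [Fintype n] [DecidableEq n]
    (X M H L : Matrix n n ℝ)
    (hX : X.PosDef) (hM : M.PosDef) (hH : Hᵀ = H)
    (hL : X * L * M + M * L * X = H) :
    0 ≤ (L * H).trace ∧ ((L * H).trace = 0 ↔ H = 0) := by
  have hXt : Xᵀ = X := by
    have := hX.isHermitian; simpa [Matrix.IsHermitian] using this
  have hMt : Mᵀ = M := by
    have := hM.isHermitian; simpa [Matrix.IsHermitian] using this
  -- symmetric part of L
  set S : Matrix n n ℝ := (1/2 : ℝ) • (L + Lᵀ) with hSdef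
  have hSt : Sᵀ = S := by
    simp [hSdef, Matrix.transpose_smul, Matrix.transpose_add, add_comm]
  -- transpose of the Lyapunov equation
  have hLt : X * Lᵀ * M + M * Lᵀ * X = H := by
    have := congrArg Matrix.transpose hL
    simpa [Matrix.transpose_add, Matrix.transpose_mul, hXt, hMt, hH,
      mul_assoc, add_comm] using this
  -- S also solves the equation
  have hS : X * S * M + M * S * X = H := by
    have : X * S * M + M * S * X =
        (1/2 : ℝ) • ((X * L * M + M * L * X) + (X * Lᵀ * M + M * Lᵀ * X)) := by
      simp [hSdef, Matrix.mul_smul, Matrix.smul_mul, Matrix.mul_add, Matrix.add_mul,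
        smul_add]
      abel
    rw [this, hL, hLt]
    simp [smul_add]; module
  -- tr(L H) = tr(S H)
  have htrL : (Lᵀ * H).trace = (L * H).trace := by
    calc (Lᵀ * H).trace = ((Lᵀ * H)ᵀ).trace := (Matrix.trace_transpose _).symm
      _ = (Hᵀ * L).trace := by rw [Matrix.transpose_mul, Matrix.transpose_transpose]
      _ = (H * L).trace := by rw [hH]
      _ = (L * H).trace := Matrix.trace_mul_comm _ _
  have htrS : (S * H).trace = (L * H).trace := by
    simp [hSdef, Matrix.add_mul, Matrix.smul_mul, Matrix.trace_add, Matrix.trace_smul, htrL]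
    ring
  -- square roots
  set R : Matrix n n ℝ := CFC.sqrt X with hRdef
  set Q : Matrix n n ℝ := CFC.sqrt M with hQdef
  have hRR : R * R = X := CFC.sqrt_mul_sqrt_self X hX.posSemidef.nonneg
  have hQQ : Q * Q = M := CFC.sqrt_mul_sqrt_self M hM.posSemidef.nonneg
  have hRt : Rᵀ = R := by
    have := (CFC.sqrt_nonneg X).posSemidef.isHermitian
    simpa [Matrix.IsHermitian] using this
  have hQt : Qᵀ = Q := by
    have := (CFC.sqrt_nonneg M).posSemidef.isHermitian
    simpa [Matrix.IsHermitian] using this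
  set N : Matrix n n ℝ := R * S * Q with hNdef
  have hRR' : ∀ Z : Matrix n n ℝ, R * (R * Z) = X * Z := fun Z => by
    rw [← Matrix.mul_assoc, hRR]
  have hQQ' : ∀ Z : Matrix n n ℝ, Q * (Q * Z) = M * Z := fun Z => by
    rw [← Matrix.mul_assoc, hQQ]
  -- tr(S H) = 2 tr(Nᵀ N)
  have hNt : Nᵀ * N = Q * (S * (X * (S * Q))) := by
    rw [hNdef]
    simp only [Matrix.transpose_mul, hRt, hQt, hSt, Matrix.mul_assoc, hRR']
  have e1 : (Nᵀ * N).trace = (S * (X * (S * M))).trace := by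
    rw [hNt, Matrix.trace_mul_comm]
    simp only [Matrix.mul_assoc, hQQ', hQQ]
  have e2 : (S * (M * (S * X))).trace = (S * (X * (S * M))).trace := by
    have ht : (S * (M * (S * X)))ᵀ = ((X * S) * M) * S := by
      simp only [Matrix.transpose_mul, hSt, hMt, hXt, Matrix.mul_assoc]
    calc (S * (M * (S * X))).trace = ((S * (M * (S * X)))ᵀ).trace :=
          (Matrix.trace_transpose _).symm
      _ = (((X * S) * M) * S).trace := by rw [ht]
      _ = (S * ((X * S) * M)).trace := Matrix.trace_mul_comm _ _
      _ = (S * (X * (S * M))).trace := by simp only [Matrix.mul_assoc]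
  have key : (S * H).trace = 2 * (Nᵀ * N).trace := by
    have : (S * H).trace = (S * (X * (S * M))).trace + (S * (M * (S * X))).trace := by
      rw [← hS, Matrix.mul_add, Matrix.trace_add]
      simp only [Matrix.mul_assoc]
    rw [this, e2, e1]; ring
  have hmain : (L * H).trace = 2 * (Nᵀ * N).trace := by rw [← htrS, key]
  constructor
  · rw [hmain]
    linarith [trace_transpose_mul_self_nonneg N]
  · constructor
    · intro h0
      rw [hmain] at h0
      have hN0 : N = 0 := (trace_transpose_mul_self_eq_zero N).mp (by linarith)
      -- invertibility of R and Q
      have hRu : IsUnit R.det := by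
        have : R.det * R.det = X.det := by rw [← Matrix.det_mul, hRR]
        have hx := hX.det_pos
        refine isUnit_iff_ne_zero.mpr ?_
        intro h; rw [h, mul_zero] at this; linarith [this ▸ hx]
      have hQu : IsUnit Q.det := by
        have : Q.det * Q.det = M.det := by rw [← Matrix.det_mul, hQQ]
        have hx := hM.det_pos
        refine isUnit_iff_ne_zero.mpr ?_
        intro h; rw [h, mul_zero] at this; linarith [this ▸ hx]
      have hS0 : S = 0 := by
        have h1 : R⁻¹ * (R * S * Q) * Q⁻¹ = 0 := by rw [← hNdef, hN0]; simp
        rwa [show R⁻¹ * (R * S * Q) * Q⁻¹ = (R⁻¹ * R) * S * (Q * Q⁻¹) by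
          simp [Matrix.mul_assoc], Matrix.nonsing_inv_mul _ hRu,
          Matrix.mul_nonsing_inv _ hQu, Matrix.one_mul, Matrix.mul_one] at h1
      rw [← hS, hS0]; simp
    · intro h0; rw [h0]; simp
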